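/- Let G = H *_A (A ⊕ ℤ) where A is a maximal abelian subgroup of a CSA group H, and let z generate the ℤ factor. Then A ⊕ ℤ is a maximal abelian subgroup of G, and any element of G commuting with a nontrivial element of A lies in A ⊕ ℤ. -/

import Mathlib

/-- A word alternating between `X \ C` and `Y \ C`. -/
def IsAlternatingWord {G : Type*} [Group G] (X Y C : Subgroup G)
    (m : ℕ) (g : ℕ → G) : Prop :=
  (∀ i < m, (g i ∈ X ∨ g i ∈ Y) ∧ g i ∉ C) ∧
  (∀ i, i + 1 < m → ¬ (g i ∈ X ∧ g (i + 1) ∈ X) ∧ ¬ (g i ∈ Y ∧ g (i + 1) ∈ Y))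

/-- Auxiliary: a list alternating between cosets. -/
def AltList {G : Type*} [Group G] (X Y C : Subgroup G) (l : List G) : Prop :=
  (∀ x ∈ l, (x ∈ X ∨ x ∈ Y) ∧ x ∉ C) ∧
  List.Chain' (fun u v => ¬ (u ∈ X ∧ v ∈ X) ∧ ¬ (u ∈ Y ∧ v ∈ Y)) l

lemma altList_swap {G : Type*} [Group G] {X Y C : Subgroup G} {l : List G}
    (h : AltList X Y C l) : AltList Y X C l :=
  ⟨fun x hx => ⟨(h.1 x hx).1.symm, (h.1 x hx).2⟩,
    h.2.imp fun _ _ h' => ⟨h'.2, h'.1⟩⟩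

lemma closure_comm_aux {G : Type*} [Group G] {s : Set G}
    (h : ∀ x ∈ s, ∀ y ∈ s, Commute x y)
    {x y : G} (hx : x ∈ Subgroup.closure s) (hy : y ∈ Subgroup.closure s) :
    Commute x y := by
  induction hx using Subgroup.closure_induction with
  | mem a ha =>
    induction hy using Subgroup.closure_induction with
    | mem b hb => exact h a ha b hb
    | one => exact Commute.one_right a
    | mul b c _ _ ih1 ih2 => exact ih1.mul_right ih2
    | inv b _ ih => exact ih.inv_right
  | one => exact Commute.one_left y
  | mul a b _ _ ih1 ih2 => exact ih1.mul_left ih2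
  | inv a _ ih => exact ih.inv_left

lemma altList_isAlternatingWord' {G : Type*} [Group G] (X Y C : Subgroup G) (l : List G)
    (h : AltList X Y C l) :
    ((∀ i < l.length, ((l.getD i 1 ∈ X ∨ l.getD i 1 ∈ Y) ∧ l.getD i 1 ∉ C)) ∧
     (∀ i, i + 1 < l.length → ¬ (l.getD i 1 ∈ X ∧ l.getD (i+1) 1 ∈ X) ∧
        ¬ (l.getD i 1 ∈ Y ∧ l.getD (i+1) 1 ∈ Y))) := by
  constructor
  · intro i hi
    rw [List.getD_eq_getElem l 1 hi]
    exact h.1 _ (l.getElem_mem hi)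
  · intro i hi
    have h1 : i < l.length := by omega
    rw [List.getD_eq_getElem l 1 h1, List.getD_eq_getElem l 1 hi]
    have := List.isChain_iff_getElem.1 h.2 i (by omega)
    simpa [List.get_eq_getElem] using this

lemma ofFn_getD_prod {G : Type*} [Group G] (l : List G) :
    (List.ofFn fun j : Fin l.length => l.getD (j : ℕ) 1).prod = l.prod := by
  have : (fun j : Fin l.length => l.getD (j : ℕ) 1)
      = fun j : Fin l.length => l[(j : ℕ)] :=
    funext fun j => List.getD_eq_getElem l 1 j.isLt
  rw [this, List.ofFn_getElem]

lemma alt_step {G : Type*} [Group G] {X Y C : Subgroup G}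
    (hCX : C ≤ X) (hXY : ∀ u, u ∈ X → u ∈ Y → u ∈ C)
    (x c : G) (hx : x ∈ X) (hc : c ∈ C) (l : List G) (hl : AltList X Y C l) :
    ∃ c' ∈ C, ∃ l' : List G, AltList X Y C l' ∧ x * (c * l.prod) = c' * l'.prod := by
  have hdX : x * c ∈ X := X.mul_mem hx (hCX hc)
  by_cases hd : x * c ∈ C
  · exact ⟨x * c, hd, l, hl, by rw [mul_assoc]⟩
  cases l with
  | nil =>
    refine ⟨1, C.one_mem, [x * c], ⟨?_, List.isChain_singleton _⟩, by simp [mul_assoc]⟩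
    rintro u hu
    rw [List.mem_singleton] at hu
    exact hu ▸ ⟨Or.inl hdX, hd⟩
  | cons w t =>
    have hw := hl.1 w (List.mem_cons_self)
    by_cases hwX : w ∈ X
    · -- merge the head
      have hyX : x * c * w ∈ X := X.mul_mem hdX hwX
      by_cases hyC : x * c * w ∈ C
      · refine ⟨x * c * w, hyC, t,
          ⟨fun u hu => hl.1 u (List.mem_cons_of_mem _ hu), hl.2.tail⟩, ?_⟩
        simp [mul_assoc]
      · have hyY : x * c * w ∉ Y := fun hy => hyC (hXY _ hyX hy)
        refine ⟨1, C.one_mem, (x * c * w) :: t, ⟨?_, ?_⟩, by simp [mul_assoc]⟩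
        · rintro u hu
          rcases List.mem_cons.1 hu with rfl | hu
          · exact ⟨Or.inl hyX, hyC⟩
          · exact hl.1 u (List.mem_cons_of_mem _ hu)
        · refine hl.2.imp_head (fun {v} hv => ?_)
          exact ⟨fun hc' => hv.1 ⟨hwX, hc'.2⟩, fun hc' => hyY hc'.1⟩
    · -- prepend a new letter
      have hwY : w ∈ Y := hw.1.resolve_left hwX
      have hdY : x * c ∉ Y := fun hy => hd (hXY _ hdX hy)
      refine ⟨1, C.one_mem, (x * c) :: w :: t, ⟨?_, ?_⟩, by simp [mul_assoc]⟩
      · rintro u hu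
        rcases List.mem_cons.1 hu with rfl | hu
        · exact ⟨Or.inl hdX, hd⟩
        · exact hl.1 u hu
      · exact hl.2.cons fun v hv => by
          have : v = w := by
            cases t <;> simp_all [List.head?]
          exact this ▸ ⟨fun hc' => hwX hc'.2, fun hc' => hdY hc'.1⟩

lemma conj_notin {G : Type*} [Group G] {X Y C : Subgroup G}
    (hCX : C ≤ X)
    (hamalg' : ∀ l : List G, l ≠ [] → AltList X Y C l → l.prod ∉ C)
    (hcsa : ∀ h ∈ X, h ∉ C → ∀ a ∈ C, h * a * h⁻¹ ∈ C → a = 1)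
    (hXY : ∀ u, u ∈ X → u ∈ Y → u ∈ C)
    (l : List G) (hne : l ≠ []) (hAlt : AltList X Y C l)
    (hlast : l.getLast hne ∈ X)
    (a : G) (ha : a ∈ C) (hane : a ≠ 1) : l.prod * a * l.prod⁻¹ ∉ C := by
  intro hmem
  obtain ⟨l', h, rfl⟩ : ∃ l' h, l = l' ++ [h] :=
    ⟨l.dropLast, l.getLast hne, (List.dropLast_append_getLast hne).symm⟩
  have hhX : h ∈ X := by
    rwa [List.getLast_append] at hlast
  have hhC : h ∉ C := (hAlt.1 h (by simp)).2
  have hh'X : h * a * h⁻¹ ∈ X := X.mul_mem (X.mul_mem hhX (hCX ha)) (X.inv_mem hhX)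
  have hh'C : h * a * h⁻¹ ∉ C := fun hmem' => hane (hcsa h hhX hhC a ha hmem')
  have hh'Y : h * a * h⁻¹ ∉ Y := fun hy => hh'C (hXY _ hh'X hy)
  have hchain : List.Chain' (fun u v => ¬ (u ∈ X ∧ v ∈ X) ∧ ¬ (u ∈ Y ∧ v ∈ Y)) (l' ++ [h]) :=
    hAlt.2
  have hchain' := (List.isChain_append.1 hchain).1
  have hjunc := (List.isChain_append.1 hchain).2.2
  have hlastX : ∀ v ∈ l'.getLast?, v ∉ X := by
    intro v hv hvX
    exact (hjunc v hv h rfl).1 ⟨hvX, hhX⟩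
  have hAltm : AltList X Y C (l' ++ ((h * a * h⁻¹) :: (l'.reverse.map fun u => u⁻¹))) := by
    constructor
    · intro u hu
      rcases List.mem_append.1 hu with hu | hu
      · exact hAlt.1 u (List.mem_append_left _ hu)
      · rcases List.mem_cons.1 hu with rfl | hu
        · exact ⟨Or.inl hh'X, hh'C⟩
        · obtain ⟨v, hv, rfl⟩ := List.mem_map.1 hu
          have hv' := hAlt.1 v (List.mem_append_left _ (List.mem_reverse.1 hv))
          refine ⟨?_, fun hC => hv'.2 ((inv_mem_iff (x := v)).1 hC)⟩
          rcases hv'.1 with h1 | h1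
          · exact Or.inl (X.inv_mem h1)
          · exact Or.inr (Y.inv_mem h1)
    · refine List.IsChain.append hchain' ?_ ?_
      · refine List.IsChain.cons ?_ ?_
        · -- chain of the reversed inverses
          rw [List.map_reverse, List.isChain_reverse, List.isChain_map]
          refine hchain'.imp ?_
          intro u v huv
          constructor
          · rintro ⟨h1, h2⟩
            exact huv.1 ⟨(inv_mem_iff (x := u)).1 h2, (inv_mem_iff (x := v)).1 h1⟩
          · rintro ⟨h1, h2⟩
            exact huv.2 ⟨(inv_mem_iff (x := u)).1 h2, (inv_mem_iff (x := v)).1 h1⟩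
        · -- junction (h*a*h⁻¹) ~ head of reversed part
          intro y hy
          rw [List.head?_map, List.head?_reverse] at hy
          obtain ⟨v, hv, rfl⟩ := Option.map_eq_some_iff.1 hy
          refine ⟨fun hc' => (hlastX v hv) ((inv_mem_iff (x := v)).1 hc'.2),
            fun hc' => hh'Y hc'.1⟩
      · -- junction between l' and the second half
        intro x hx y hy
        simp only [List.head?_cons, Option.mem_def, Option.some.injEq] at hy
        subst hy
        exact ⟨fun hc' => hlastX x hx hc'.1, fun hc' => hh'Y hc'.2⟩
  have hprodrev : (l'.reverse.map fun u => u⁻¹).prod = l'.prod⁻¹ := by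
    rw [List.map_reverse, ← List.prod_inv_reverse]
  have hprodm : (l' ++ ((h * a * h⁻¹) :: (l'.reverse.map fun u => u⁻¹))).prod
      = (l' ++ [h]).prod * a * (l' ++ [h]).prod⁻¹ := by
    rw [List.prod_append, List.prod_cons, hprodrev, List.prod_append, List.prod_singleton]
    group
  exact hamalg' _ (by simp) hAltm (hprodm ▸ hmem)

/-- Let `G = H *_A (A ⊕ ⟨z⟩)` be a free abelian flat over a CSA group `H`,
where `A` is maximal abelian in `H` and `z` generates the `ℤ` factor. Then
`A ⊔ ⟨z⟩` (the flat `A ⊕ ℤ`) is a maximal abelian subgroup of `G`, and any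
element of `G` commuting with a nontrivial element of `A` lies in `A ⊔ ⟨z⟩`. -/
theorem abelian_flat_maximal_abelian {G : Type*} [Group G]
    (H A : Subgroup G) (z : G) (hAH : A ≤ H)
    (hAcomm : ∀ x ∈ A, ∀ y ∈ A, Commute x y)
    (hAmax : ∀ B : Subgroup G, B ≤ H → (∀ x ∈ B, ∀ y ∈ B, Commute x y) →
      A ≤ B → B = A)
    (hCSA : ∀ B : Subgroup G, B ≤ H → (∀ x ∈ B, ∀ y ∈ B, Commute x y) →
      (∀ B' : Subgroup G, B' ≤ H → (∀ x ∈ B', ∀ y ∈ B', Commute x y) →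
        B ≤ B' → B' = B) →
      ∀ g ∈ H, g ∉ B → ∀ x ∈ B, g * x * g⁻¹ ∈ B → x = 1)
    (hz : ∀ a ∈ A, Commute z a) (hzH : z ∉ H) (hzinf : ¬ IsOfFinOrder z)
    (hgen : Subgroup.closure ((H : Set G) ∪ {z}) = ⊤)
    (hamalg : ∀ (m : ℕ) (g : ℕ → G), 1 ≤ m →
      IsAlternatingWord H (A ⊔ Subgroup.zpowers z) A m g →
      (List.ofFn fun j : Fin m => g j).prod ∉ A) :
    ((∀ x ∈ A ⊔ Subgroup.zpowers z, ∀ y ∈ A ⊔ Subgroup.zpowers z, Commute x y) ∧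
      ∀ B : Subgroup G, (∀ x ∈ B, ∀ y ∈ B, Commute x y) →
        A ⊔ Subgroup.zpowers z ≤ B → B = A ⊔ Subgroup.zpowers z) ∧
    (∀ g a : G, a ∈ A → a ≠ 1 → Commute g a → g ∈ A ⊔ Subgroup.zpowers z) := by
  set K := A ⊔ Subgroup.zpowers z with hKdef
  have hAK : A ≤ K := le_sup_left
  have hzK : z ∈ K := Subgroup.mem_sup_right (Subgroup.mem_zpowers z)
  -- every element of K has the form a * z ^ n
  have Kform : ∀ x ∈ K, ∃ a ∈ A, ∃ n : ℤ, x = a * z ^ n := by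
    let S : Subgroup G :=
    { carrier := {x : G | ∃ a ∈ A, ∃ n : ℤ, x = a * z ^ n}
      one_mem' := ⟨1, A.one_mem, 0, by simp⟩
      mul_mem' := by
        rintro x y ⟨a, ha, m, rfl⟩ ⟨b, hb, n, rfl⟩
        refine ⟨a * b, A.mul_mem ha hb, m + n, ?_⟩
        have hcb : Commute (z ^ m) b := (hz b hb).zpow_left m
        rw [zpow_add]
        calc a * z ^ m * (b * z ^ n) = a * (z ^ m * b) * z ^ n := by group
          _ = a * (b * z ^ m) * z ^ n := by rw [hcb.eq]
          _ = a * b * (z ^ m * z ^ n) := by group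
      inv_mem' := by
        rintro x ⟨a, ha, n, rfl⟩
        refine ⟨a⁻¹, A.inv_mem ha, -n, ?_⟩
        have hca : Commute (z ^ n) a := (hz a ha).zpow_left n
        rw [mul_inv_rev, zpow_neg]
        exact hca.inv_inv.eq }
    intro x hx
    have hKS : K ≤ S := by
      refine sup_le (fun a ha => ⟨a, ha, 0, by simp⟩) ?_
      rintro w hw
      obtain ⟨n, rfl⟩ := Subgroup.mem_zpowers_iff.1 hw
      exact ⟨1, A.one_mem, n, by simp⟩
    exact hKS hx
  -- K is abelian
  have Kcomm : ∀ x ∈ K, ∀ y ∈ K, Commute x y := by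
    intro x hx y hy
    obtain ⟨a, ha, m, rfl⟩ := Kform x hx
    obtain ⟨b, hb, n, rfl⟩ := Kform y hy
    have h1 : Commute a b := hAcomm a ha b hb
    have h2 : Commute a (z ^ n) := ((hz a ha).zpow_left n).symm
    have h3 : Commute (z ^ m) b := (hz b hb).zpow_left m
    have h4 : Commute (z ^ m) (z ^ n) := (Commute.refl z).zpow_zpow m n
    exact (h1.mul_right h2).mul_left (h3.mul_right h4)
  -- H ∩ K ≤ A
  have hHK : ∀ u, u ∈ H → u ∈ K → u ∈ A := by
    intro u huH huK
    obtain ⟨a, ha, n, rfl⟩ := Kform u huK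
    have hznH : z ^ n ∈ H := by
      have := H.mul_mem (H.inv_mem (hAH ha)) huH
      simpa [← mul_assoc] using this
    have hBle : Subgroup.closure ((A : Set G) ∪ {z ^ n}) ≤ H := by
      rw [Subgroup.closure_le]
      rintro v (hv | hv)
      · exact hAH hv
      · rw [Set.mem_singleton_iff] at hv; exact hv ▸ hznH
    have hgencomm : ∀ x ∈ ((A : Set G) ∪ {z ^ n}), ∀ y ∈ ((A : Set G) ∪ {z ^ n}),
        Commute x y := by
      rintro x (hx | hx) y (hy | hy)
      · exact hAcomm x hx y hy
      · rw [Set.mem_singleton_iff] at hy; subst hy; exact ((hz x hx).zpow_left n).symm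
      · rw [Set.mem_singleton_iff] at hx; subst hx; exact (hz y hy).zpow_left n
      · rw [Set.mem_singleton_iff] at hx; rw [Set.mem_singleton_iff] at hy
        subst hx; subst hy; exact Commute.refl _
    have hBA : Subgroup.closure ((A : Set G) ∪ {z ^ n}) = A :=
      hAmax _ hBle (fun x hx y hy => closure_comm_aux hgencomm hx hy)
        (fun a ha' => Subgroup.subset_closure (Or.inl ha'))
    have hzn : z ^ n ∈ A := by
      rw [← hBA]; exact Subgroup.subset_closure (Or.inr rfl)
    exact A.mul_mem ha hzn
  have hKH : ∀ u, u ∈ K → u ∈ H → u ∈ A := fun u h1 h2 => hHK u h2 h1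
  -- the amalgamation condition, list form
  have hamalg' : ∀ l : List G, l ≠ [] → AltList H K A l → l.prod ∉ A := by
    intro l hne hAlt
    have h1 : 1 ≤ l.length := List.length_pos_iff.2 hne
    have := hamalg l.length (fun i => l.getD i 1) h1
      (altList_isAlternatingWord' H K A l hAlt)
    rwa [ofFn_getD_prod] at this
  -- normal form
  have normal : ∀ g : G, ∃ c ∈ A, ∃ l : List G, AltList H K A l ∧ g = c * l.prod := by
    intro g
    have hg : g ∈ Subgroup.closure ((H : Set G) ∪ {z}) := by
      rw [hgen]; exact Subgroup.mem_top g
    induction hg using Subgroup.closure_induction_left with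
    | one => exact ⟨1, A.one_mem, [], ⟨by simp, List.isChain_nil⟩, by simp⟩
    | mul_left x hx y hy ih =>
      obtain ⟨c, hc, l, hAlt, rfl⟩ := ih
      rcases hx with hxH | hxz
      · obtain ⟨c', hc', l', hAlt', heq⟩ := alt_step hAH hHK x c hxH hc l hAlt
        exact ⟨c', hc', l', hAlt', heq⟩
      · rw [Set.mem_singleton_iff] at hxz; subst hxz
        obtain ⟨c', hc', l', hAlt', heq⟩ :=
          alt_step (X := K) (Y := H) hAK hKH x c hzK hc l (altList_swap hAlt)
        exact ⟨c', hc', l', altList_swap hAlt', heq⟩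
    | inv_mul_cancel x hx y hy ih =>
      obtain ⟨c, hc, l, hAlt, rfl⟩ := ih
      rcases hx with hxH | hxz
      · obtain ⟨c', hc', l', hAlt', heq⟩ :=
          alt_step hAH hHK x⁻¹ c (H.inv_mem hxH) hc l hAlt
        exact ⟨c', hc', l', hAlt', heq⟩
      · rw [Set.mem_singleton_iff] at hxz; subst hxz
        obtain ⟨c', hc', l', hAlt', heq⟩ :=
          alt_step (X := K) (Y := H) hAK hKH x⁻¹ c (K.inv_mem hzK) hc l (altList_swap hAlt)
        exact ⟨c', hc', l', altList_swap hAlt', heq⟩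
  have conj_notin' := conj_notin (X := H) (Y := K) (C := A) hAH hamalg'
    (hCSA A hAH hAcomm hAmax) hHK
  -- part 2
  have part2 : ∀ g a : G, a ∈ A → a ≠ 1 → Commute g a → g ∈ K := by
    intro g a ha hane hcomm
    obtain ⟨c, hc, l, hAlt, rfl⟩ := normal g
    have hgc : (c * l.prod) * a * (c * l.prod)⁻¹ = a := by
      rw [hcomm.eq]; group
    have hconj : l.prod * a * l.prod⁻¹ = a := by
      have hca : Commute c a := hAcomm c hc a ha
      have h2 : l.prod * a * l.prod⁻¹ = c⁻¹ * (c * l.prod * a * (c * l.prod)⁻¹) * c := by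
        group
      rw [hgc] at h2
      rw [h2, hca.inv_left.eq]; group
    rcases List.eq_nil_or_concat l with rfl | ⟨l'', t, rfl⟩
    · simpa using hAK hc
    · rw [List.concat_eq_append] at hAlt hconj ⊢
      have htmem := hAlt.1 t (by simp)
      by_cases htH : t ∈ H
      · have hmem : (l'' ++ [t]).prod * a * (l'' ++ [t]).prod⁻¹ ∈ A := by
          rw [hconj]; exact ha
        exact absurd hmem (conj_notin' (l'' ++ [t]) (by simp) hAlt
          (by rwa [List.getLast_append]) a ha hane)
      · have htK : t ∈ K := htmem.1.resolve_left htH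
        rcases List.eq_nil_or_concat l'' with rfl | ⟨l₃, s, rfl⟩
        · have he : c * ([] ++ [t] : List G).prod = c * t := by simp
          rw [he]; exact K.mul_mem (hAK hc) htK
        · rw [List.concat_eq_append] at hAlt hconj ⊢
          have hsH : s ∈ H := by
            have hj := (List.isChain_append.1 hAlt.2).2.2
            have hgl : (l₃ ++ [s]).getLast? = some s := by simp
            have hs := hj s hgl t rfl
            have hsmem := hAlt.1 s (by simp)
            rcases hsmem.1 with h1 | h1
            · exact h1
            · exact (hs.2 ⟨h1, htK⟩).elim
          have hta : Commute t a := Kcomm t htK a (hAK ha)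
          have hconj2 : (l₃ ++ [s]).prod * a * (l₃ ++ [s]).prod⁻¹ = a := by
            have hl : ((l₃ ++ [s]) ++ [t]).prod = (l₃ ++ [s]).prod * t := by
              rw [List.prod_append]
              simp
            rw [hl] at hconj
            have key : ((l₃ ++ [s]).prod * t) * a * ((l₃ ++ [s]).prod * t)⁻¹
                = (l₃ ++ [s]).prod * (t * a * t⁻¹) * (l₃ ++ [s]).prod⁻¹ := by group
            rw [key, hta.eq] at hconj
            calc (l₃ ++ [s]).prod * a * (l₃ ++ [s]).prod⁻¹
                = (l₃ ++ [s]).prod * (a * t * t⁻¹) * (l₃ ++ [s]).prod⁻¹ := by group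
              _ = a := hconj
          have hAlt2 : AltList H K A (l₃ ++ [s]) :=
            ⟨fun u hu => hAlt.1 u (List.mem_append_left _ hu),
              (List.isChain_append.1 hAlt.2).1⟩
          have hmem2 : (l₃ ++ [s]).prod * a * (l₃ ++ [s]).prod⁻¹ ∈ A := by
            rw [hconj2]; exact ha
          exact absurd hmem2 (conj_notin' (l₃ ++ [s]) (by simp) hAlt2
            (by rwa [List.getLast_append]) a ha hane)
  refine ⟨⟨Kcomm, ?_⟩, part2⟩
  intro B hBcomm hKB
  by_cases hA1 : ∃ a ∈ A, a ≠ 1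
  · obtain ⟨a, ha, hane⟩ := hA1
    refine le_antisymm (fun b hb => ?_) hKB
    exact part2 b a ha hane (hBcomm b hb a (hKB (hAK ha)))
  · push_neg at hA1
    have hHA : H ≤ A := by
      intro h hh
      have hz1 : Subgroup.zpowers h = A := by
        refine hAmax _ ?_ ?_ ?_
        · rw [Subgroup.zpowers_le]; exact hh
        · rintro x hx y hy
          obtain ⟨m, rfl⟩ := Subgroup.mem_zpowers_iff.1 hx
          obtain ⟨n, rfl⟩ := Subgroup.mem_zpowers_iff.1 hy
          exact (Commute.refl h).zpow_zpow m n
        · intro a ha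
          rw [hA1 a ha]; exact Subgroup.one_mem _
      rw [← hz1]; exact Subgroup.mem_zpowers h
    have hKtop : K = ⊤ := by
      rw [eq_top_iff, ← hgen, Subgroup.closure_le]
      rintro x (hx | hx)
      · exact hAK (hHA hx)
      · rw [Set.mem_singleton_iff] at hx; exact hx ▸ hzK
    rw [hKtop]
    exact le_antisymm le_top (hKtop ▸ hKB)
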